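/- Let U ∈ ℝ^{T×(2n−1)p}, β ∈ ℝ^{(2n−1)p}, ξ ∈ ℝ^T, y = Uβ + ξ, and λ > 0. If β̂ is a minimizer of β′ ↦ (1/2)‖Uβ′ − y‖₂² + λ‖G(β′)‖_*, then ‖G(β̂)‖_* − ‖G(β)‖_* ≤ (‖G(Uᵀξ)‖/λ) · ‖G(β̂ − β)‖_*. -/

import Mathlib

open MeasureTheory ProbabilityTheory Matrix

noncomputable section

def eNorm {ι : Type*} [Fintype ι] (x : ι → ℝ) : ℝ := Real.sqrt (∑ i, x i ^ 2)

def eInner {ι : Type*} [Fintype ι] (x y : ι → ℝ) : ℝ := ∑ i, x i * y i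

def frobNorm {m n : Type*} [Fintype m] [Fintype n] (A : Matrix m n ℝ) : ℝ :=
  Real.sqrt (∑ i, ∑ j, A i j ^ 2)

def frobInner {m n : Type*} [Fintype m] [Fintype n] (A B : Matrix m n ℝ) : ℝ :=
  ∑ i, ∑ j, A i j * B i j

def specNorm {m n : Type*} [Fintype m] [Fintype n] (A : Matrix m n ℝ) : ℝ :=
  sSup {c | ∃ x : n → ℝ, eNorm x ≤ 1 ∧ c = eNorm (A.mulVec x)}

def nucNorm {m n : Type*} [Fintype m] [Fintype n] [DecidableEq n] (A : Matrix m n ℝ) : ℝ :=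
  ∑ i, Real.sqrt ((show (Aᵀ * A).IsHermitian by
    simpa using Matrix.isHermitian_conjTranspose_mul_self A).eigenvalues i)

def hankel {n : ℕ} (v : Fin (2*n-1) → ℝ) : Matrix (Fin n) (Fin n) ℝ :=
  Matrix.of fun j k => v ⟨(j:ℕ) + k, by omega⟩

def Kw (n : ℕ) (j : Fin (2*n-1)) : ℝ :=
  if (j:ℕ) + 1 ≤ n then Real.sqrt ((j:ℕ) + 1) else Real.sqrt (2*n - ((j:ℕ)+1))

def wHankel {n p : ℕ} (β : Fin (2*n-1) × Fin p → ℝ) : Matrix (Fin n) (Fin n × Fin p) ℝ :=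
  Matrix.of fun j kl => β (⟨(j:ℕ) + kl.1, by omega⟩, kl.2) / Kw n ⟨(j:ℕ) + kl.1, by omega⟩

def blockHankel {n p : ℕ} (h : Fin (2*n-1) × Fin p → ℝ) : Matrix (Fin n) (Fin n × Fin p) ℝ :=
  Matrix.of fun j kl => h (⟨(j:ℕ) + kl.1, by omega⟩, kl.2)

def stdGaussian (ι : Type*) [Fintype ι] : Measure (ι → ℝ) :=
  Measure.pi fun _ => gaussianReal 0 1

def gaussWidth {ι : Type*} [Fintype ι] (S : Set (ι → ℝ)) : ℝ :=
  ∫ g, sSup ((fun γ => eInner γ g) '' S) ∂ stdGaussian ι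

section Aux

lemma eNorm_eq_norm' {ι : Type*} [Fintype ι] (x : EuclideanSpace ℝ ι) : eNorm ⇑x = ‖x‖ := by
  rw [EuclideanSpace.norm_eq, eNorm]
  congr 1; apply Finset.sum_congr rfl; intro i _
  show x i ^ 2 = ‖x i‖ ^ 2
  rw [Real.norm_eq_abs, sq_abs]

lemma eInner_eq_inner' {ι : Type*} [Fintype ι] (x y : EuclideanSpace ℝ ι) :
    eInner ⇑x ⇑y = (inner ℝ x y : ℝ) := by
  rw [PiLp.inner_apply, eInner]
  apply Finset.sum_congr rfl; intro i _; simp [RCLike.inner_apply, mul_comm]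

lemma eInner_le' {ι : Type*} [Fintype ι] (x y : ι → ℝ) : eInner x y ≤ eNorm x * eNorm y := by
  let x' : EuclideanSpace ℝ ι := WithLp.toLp 2 x
  let y' : EuclideanSpace ℝ ι := WithLp.toLp 2 y
  calc eInner x y = (inner ℝ x' y' : ℝ) := eInner_eq_inner' x' y'
    _ ≤ ‖x'‖ * ‖y'‖ := real_inner_le_norm x' y'
    _ = eNorm x * eNorm y := by rw [← eNorm_eq_norm', ← eNorm_eq_norm']

lemma eNorm_nonneg' {ι : Type*} [Fintype ι] (x : ι → ℝ) : 0 ≤ eNorm x := Real.sqrt_nonneg _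

lemma eNorm_sq' {ι : Type*} [Fintype ι] (x : ι → ℝ) : eNorm x ^ 2 = ∑ i, x i ^ 2 :=
  Real.sq_sqrt (Finset.sum_nonneg fun _ _ => sq_nonneg _)

section SpecAux

variable {m n : Type*} [Fintype m] [Fintype n]

lemma mulVec_eNorm_le_frob (A : Matrix m n ℝ) {x : n → ℝ} (hx : eNorm x ≤ 1) :
    eNorm (A *ᵥ x) ≤ frobNorm A := by
  apply Real.sqrt_le_sqrt
  have hx2 : ∑ j, x j ^ 2 ≤ 1 := by
    have := eNorm_sq' x
    nlinarith [eNorm_nonneg' x]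
  apply Finset.sum_le_sum
  intro i _
  have cs : (∑ j, A i j * x j) ^ 2 ≤ (∑ j, A i j ^ 2) * (∑ j, x j ^ 2) := by
    have := real_inner_mul_inner_self_le (F := EuclideanSpace ℝ n)
      ((WithLp.equiv 2 _).symm (A i)) ((WithLp.equiv 2 _).symm x)
    exact Finset.sum_mul_sq_le_sq_mul_sq Finset.univ (A i) x
  have h1 : (A *ᵥ x) i ^ 2 = (∑ j, A i j * x j) ^ 2 := by rfl
  rw [h1]
  calc (∑ j, A i j * x j) ^ 2 ≤ (∑ j, A i j ^ 2) * (∑ j, x j ^ 2) := cs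
    _ ≤ (∑ j, A i j ^ 2) * 1 := by
        apply mul_le_mul_of_nonneg_left hx2 (Finset.sum_nonneg fun j _ => sq_nonneg _)
    _ = ∑ j, A i j ^ 2 := mul_one _

lemma specNorm_bdd (A : Matrix m n ℝ) :
    BddAbove {c | ∃ x : n → ℝ, eNorm x ≤ 1 ∧ c = eNorm (A.mulVec x)} := by
  refine ⟨frobNorm A, ?_⟩
  rintro c ⟨x, hx, rfl⟩
  exact mulVec_eNorm_le_frob A hx

lemma le_specNorm (A : Matrix m n ℝ) {x : n → ℝ} (hx : eNorm x ≤ 1) :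
    eNorm (A *ᵥ x) ≤ specNorm A :=
  le_csSup (specNorm_bdd A) ⟨x, hx, rfl⟩

lemma specNorm_nonneg (A : Matrix m n ℝ) : 0 ≤ specNorm A := by
  refine le_trans (eNorm_nonneg' (A *ᵥ 0)) (le_specNorm A ?_)
  simp [eNorm]

end SpecAux

section EigAux

variable {m n : Type*} [Fintype m] [Fintype n] [DecidableEq n]

def eigVec (B : Matrix n n ℝ) (hB : B.IsHermitian) (j : n) : n → ℝ :=
  ⇑(hB.eigenvectorBasis j)

lemma eigVec_rows (B : Matrix n n ℝ) (hB : B.IsHermitian) (k l : n) :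
    ∑ j, eigVec B hB j k * eigVec B hB j l = if k = l then 1 else 0 := by
  have h := (hB.eigenvectorBasis).sum_inner_mul_inner
    (EuclideanSpace.single k (1:ℝ)) (EuclideanSpace.single l (1:ℝ))
  simp only [EuclideanSpace.inner_single_left, EuclideanSpace.inner_single_right,
    _root_.map_one, one_mul, mul_one, starRingEnd_apply, star_trivial,
    EuclideanSpace.single_apply] at h
  rw [show (∑ j, eigVec B hB j k * eigVec B hB j l) =
      ∑ x : n, hB.eigenvectorBasis x k * hB.eigenvectorBasis x l from rfl, h]
  simp [eq_comm]

lemma eigVec_eNorm (B : Matrix n n ℝ) (hB : B.IsHermitian) (j : n) :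
    eNorm (eigVec B hB j) = 1 := by
  rw [eigVec, eNorm_eq_norm']
  exact hB.eigenvectorBasis.orthonormal.1 j

lemma eigVec_dot_self (B : Matrix n n ℝ) (hB : B.IsHermitian) (j : n) :
    eigVec B hB j ⬝ᵥ eigVec B hB j = 1 := by
  have h := eigVec_eNorm B hB j
  have h2 : eNorm (eigVec B hB j) ^ 2 = ∑ i, eigVec B hB j i ^ 2 :=
    Real.sq_sqrt (Finset.sum_nonneg fun i _ => sq_nonneg _)
  rw [h, one_pow] at h2
  rw [dotProduct]
  simp_rw [← sq]
  exact h2.symm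

lemma frobInner_eq_sum (A B : Matrix m n ℝ) (C : Matrix n n ℝ) (hC : C.IsHermitian) :
    frobInner A B = ∑ j, eInner (A *ᵥ eigVec C hC j) (B *ᵥ eigVec C hC j) := by
  set v := eigVec C hC with hv
  have step : ∀ j, eInner (A *ᵥ v j) (B *ᵥ v j)
      = ∑ i, ∑ k, ∑ l, A i k * B i l * (v j k * v j l) := by
    intro j
    apply Finset.sum_congr rfl; intro i _
    rw [show (A *ᵥ v j) i = ∑ k, A i k * v j k from rfl,
        show (B *ᵥ v j) i = ∑ l, B i l * v j l from rfl, Finset.sum_mul_sum]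
    apply Finset.sum_congr rfl; intro k _
    apply Finset.sum_congr rfl; intro l _; ring
  symm
  calc ∑ j, eInner (A *ᵥ v j) (B *ᵥ v j)
      = ∑ j, ∑ i, ∑ k, ∑ l, A i k * B i l * (v j k * v j l) := by
        exact Finset.sum_congr rfl fun j _ => step j
    _ = ∑ i, ∑ k, ∑ l, ∑ j, A i k * B i l * (v j k * v j l) := by
        rw [Finset.sum_comm]
        apply Finset.sum_congr rfl; intro i _
        rw [Finset.sum_comm]
        apply Finset.sum_congr rfl; intro k _
        rw [Finset.sum_comm]
    _ = ∑ i, ∑ k, ∑ l, A i k * B i l * (if k = l then 1 else 0) := by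
        apply Finset.sum_congr rfl; intro i _
        apply Finset.sum_congr rfl; intro k _
        apply Finset.sum_congr rfl; intro l _
        rw [← Finset.mul_sum, hv, eigVec_rows C hC]
    _ = frobInner A B := by
        apply Finset.sum_congr rfl; intro i _
        apply Finset.sum_congr rfl; intro k _
        simp

lemma mulVec_sq_sum (B : Matrix m n ℝ) (j : n) :
    ∑ i, (B *ᵥ eigVec _ (show (Bᵀ * B).IsHermitian by simpa using Matrix.isHermitian_conjTranspose_mul_self B) j) i ^ 2
      = (show (Bᵀ * B).IsHermitian by simpa using Matrix.isHermitian_conjTranspose_mul_self B).eigenvalues j := by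
  set hH := (show (Bᵀ * B).IsHermitian by simpa using Matrix.isHermitian_conjTranspose_mul_self B)
  set v := eigVec _ hH j with hv
  have hBH : Bᴴ = Bᵀ := by ext i k; simp [conjTranspose_apply]
  have h1 : (∑ i, (B *ᵥ v) i ^ 2) = (B *ᵥ v) ⬝ᵥ (B *ᵥ v) := by
    rw [dotProduct]; apply Finset.sum_congr rfl; intro i _; ring
  have h2 : v ⬝ᵥ ((Bᴴ * B) *ᵥ v) = (B *ᵥ v) ⬝ᵥ (B *ᵥ v) := by
    rw [← mulVec_mulVec, dotProduct_mulVec, hBH, vecMul_transpose]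
  have h3 : (Bᴴ * B) *ᵥ v = hH.eigenvalues j • v := hH.mulVec_eigenvectorBasis j
  rw [h1, ← h2, h3, dotProduct_smul, smul_eq_mul, eigVec_dot_self, mul_one]

lemma frobInner_le_spec_nuc (A B : Matrix m n ℝ) :
    frobInner A B ≤ specNorm A * nucNorm B := by
  set hH := (show (Bᵀ * B).IsHermitian by simpa using Matrix.isHermitian_conjTranspose_mul_self B) with hHdef
  rw [frobInner_eq_sum A B _ hH, nucNorm, Finset.mul_sum]
  apply Finset.sum_le_sum
  intro j _
  have hv1 : eNorm (eigVec _ hH j) = 1 := eigVec_eNorm _ hH j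
  have hA : eNorm (A *ᵥ eigVec _ hH j) ≤ specNorm A := le_specNorm A (le_of_eq hv1)
  have hBn : eNorm (B *ᵥ eigVec _ hH j) = Real.sqrt (hH.eigenvalues j) := by
    rw [eNorm, mulVec_sq_sum]
  calc eInner (A *ᵥ eigVec _ hH j) (B *ᵥ eigVec _ hH j)
      ≤ eNorm (A *ᵥ eigVec _ hH j) * eNorm (B *ᵥ eigVec _ hH j) := eInner_le' _ _
    _ ≤ specNorm A * Real.sqrt (hH.eigenvalues j) :=
        mul_le_mul hA (le_of_eq hBn) (eNorm_nonneg' _) (specNorm_nonneg A)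

end EigAux

section CountAux

def cnt (n : ℕ) (s : Fin (2*n-1)) : ℕ := if (s:ℕ) + 1 ≤ n then (s:ℕ) + 1 else 2*n - 1 - (s:ℕ)

lemma cnt_pos (n : ℕ) (s : Fin (2*n-1)) : 0 < cnt n s := by
  have := s.2
  unfold cnt; split <;> omega

lemma Kw_sq (n : ℕ) (s : Fin (2*n-1)) : Kw n s ^ 2 = (cnt n s : ℝ) := by
  have := s.2
  unfold Kw cnt; split
  · rw [Real.sq_sqrt (by positivity)]; push_cast; ring
  · have h1 : (s:ℕ) + 1 ≤ 2*n := by omega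
    have h1' : ((s:ℕ):ℝ) + 1 ≤ 2*(n:ℝ) := by exact_mod_cast h1
    rw [Real.sq_sqrt (by linarith)]
    rw [Nat.cast_sub (by omega), Nat.cast_sub (by omega)]
    push_cast; ring

lemma card_fiber (n : ℕ) (s : Fin (2*n-1)) :
    (Finset.univ.filter (fun jk : Fin n × Fin n => (jk.1:ℕ) + (jk.2:ℕ) = (s:ℕ))).card
      = cnt n s := by
  have hs := s.2
  have hn : 1 ≤ n := by omega
  have hcard : (Finset.univ.filter (fun jk : Fin n × Fin n => (jk.1:ℕ) + (jk.2:ℕ) = (s:ℕ))).card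
      = (Finset.Icc ((s:ℕ)+1-n) (min (s:ℕ) (n-1))).card := by
    apply Finset.card_bij (fun jk _ => (jk.1 : ℕ))
    · rintro ⟨j, k⟩ hjk
      simp only [Finset.mem_filter, Finset.mem_univ, true_and] at hjk
      have hj := j.2; have hk := k.2
      simp only [Finset.mem_Icc, le_min_iff]
      omega
    · rintro ⟨j1, k1⟩ h1 ⟨j2, k2⟩ h2 hj
      simp only [Finset.mem_filter, Finset.mem_univ, true_and] at h1 h2
      have := j1.2; have := k1.2
      ext
      · exact hj
      · simp only at hj ⊢; omega
    · intro x hx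
      simp only [Finset.mem_Icc, le_min_iff] at hx
      refine ⟨(⟨x, by omega⟩, ⟨(s:ℕ) - x, by omega⟩), ?_, rfl⟩
      simp only [Finset.mem_filter, Finset.mem_univ, true_and]
      omega
  rw [hcard, Nat.card_Icc]
  unfold cnt; split <;> omega

lemma sum_pairs (n : ℕ) (f : Fin (2*n-1) → ℝ) :
    ∑ j : Fin n, ∑ k : Fin n, f ⟨(j:ℕ) + (k:ℕ), by have := j.2; have := k.2; omega⟩
      = ∑ s : Fin (2*n-1), (cnt n s : ℝ) * f s := by
  classical
  have h0 : (∑ j : Fin n, ∑ k : Fin n, f ⟨(j:ℕ) + (k:ℕ), by have := j.2; have := k.2; omega⟩)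
      = ∑ jk : Fin n × Fin n, f ⟨(jk.1:ℕ) + (jk.2:ℕ), by have := jk.1.2; have := jk.2.2; omega⟩ :=
    (Fintype.sum_prod_type (f := fun jk : Fin n × Fin n =>
      f ⟨(jk.1:ℕ) + (jk.2:ℕ), by have := jk.1.2; have := jk.2.2; omega⟩)).symm
  rw [h0]
  rw [← Finset.sum_fiberwise (g := fun jk : Fin n × Fin n =>
      (⟨(jk.1:ℕ) + (jk.2:ℕ), by have := jk.1.2; have := jk.2.2; omega⟩ : Fin (2*n-1)))
      (s := Finset.univ) (f := fun jk : Fin n × Fin n =>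
      f ⟨(jk.1:ℕ) + (jk.2:ℕ), by have := jk.1.2; have := jk.2.2; omega⟩)]
  apply Finset.sum_congr rfl
  intro s _
  have hfib : ∀ jk ∈ Finset.univ.filter (fun jk : Fin n × Fin n =>
      (⟨(jk.1:ℕ) + (jk.2:ℕ), by have := jk.1.2; have := jk.2.2; omega⟩ : Fin (2*n-1)) = s),
      f ⟨(jk.1:ℕ) + (jk.2:ℕ), by have := jk.1.2; have := jk.2.2; omega⟩ = f s := by
    intro jk hjk
    simp only [Finset.mem_filter] at hjk
    rw [hjk.2]
  rw [Finset.sum_congr rfl hfib, Finset.sum_const, nsmul_eq_mul]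
  congr 1
  rw [← card_fiber n s]
  apply congrArg (fun t : ℕ => (t:ℝ))
  apply congrArg Finset.card
  apply Finset.filter_congr
  intro jk _
  simp [Fin.ext_iff]

lemma wHankel_isometry {n p : ℕ} (a b : Fin (2*n-1) × Fin p → ℝ) :
    eInner a b = frobInner (wHankel a) (wHankel b) := by
  classical
  have hKne : ∀ s : Fin (2*n-1), Kw n s ^ 2 ≠ 0 := by
    intro s
    rw [Kw_sq]
    exact_mod_cast (cnt_pos n s).ne'
  have step : ∀ (j k : Fin n),
      (∑ l : Fin p, wHankel a j (k, l) * wHankel b j (k, l))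
        = (fun s : Fin (2*n-1) => (∑ l, a (s, l) * b (s, l)) / Kw n s ^ 2)
            ⟨(j:ℕ) + (k:ℕ), by have := j.2; have := k.2; omega⟩ := by
    intro j k
    simp only [wHankel, Matrix.of_apply]
    rw [Finset.sum_div]
    apply Finset.sum_congr rfl; intro l _
    rw [div_mul_div_comm, sq]
  calc eInner a b = ∑ s : Fin (2*n-1), ∑ l : Fin p, a (s, l) * b (s, l) := by
        rw [eInner, Fintype.sum_prod_type]
    _ = ∑ s : Fin (2*n-1), (cnt n s : ℝ) *
          ((∑ l, a (s, l) * b (s, l)) / Kw n s ^ 2) := by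
        apply Finset.sum_congr rfl; intro s _
        rw [Kw_sq, mul_div_cancel₀]
        exact_mod_cast (cnt_pos n s).ne'
    _ = ∑ j : Fin n, ∑ k : Fin n,
          (fun s : Fin (2*n-1) => (∑ l, a (s, l) * b (s, l)) / Kw n s ^ 2)
            ⟨(j:ℕ) + (k:ℕ), by have := j.2; have := k.2; omega⟩ :=
        (sum_pairs n _).symm
    _ = ∑ j : Fin n, ∑ kl : Fin n × Fin p, wHankel a j kl * wHankel b j kl := by
        apply Finset.sum_congr rfl; intro j _
        rw [Fintype.sum_prod_type]
        exact (Finset.sum_congr rfl fun k _ => (step j k)).symm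
    _ = frobInner (wHankel a) (wHankel b) := rfl

end CountAux

lemma frobInner_comm' {m n : Type*} [Fintype m] [Fintype n] (A B : Matrix m n ℝ) :
    frobInner A B = frobInner B A := by
  unfold frobInner
  exact Finset.sum_congr rfl fun i _ => Finset.sum_congr rfl fun j _ => mul_comm _ _

end Aux

/-- If `β̂` minimizes the regularized objective `(1/2)‖Uβ' - y‖₂² + λ‖G(β')‖_*` with
`y = Uβ + ξ`, then `‖G(β̂)‖_* - ‖G(β)‖_* ≤ (‖G(Uᵀξ)‖/λ)·‖G(β̂ - β)‖_*`. -/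
theorem stmt9 (n p T : ℕ) (hn : 1 ≤ n) (hp : 1 ≤ p)
    (U : Matrix (Fin T) (Fin (2*n-1) × Fin p) ℝ)
    (β βhat : Fin (2*n-1) × Fin p → ℝ) (ξ : Fin T → ℝ) (l : ℝ) (hl : 0 < l)
    (hmin : ∀ β' : Fin (2*n-1) × Fin p → ℝ,
      (1/2) * eNorm (U *ᵥ βhat - (U *ᵥ β + ξ)) ^ 2 + l * nucNorm (wHankel βhat) ≤
      (1/2) * eNorm (U *ᵥ β' - (U *ᵥ β + ξ)) ^ 2 + l * nucNorm (wHankel β')) :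
    nucNorm (wHankel βhat) - nucNorm (wHankel β) ≤
      (specNorm (wHankel (Uᵀ *ᵥ ξ)) / l) * nucNorm (wHankel (βhat - β)) := by
  have hm := hmin β
  have e1 : U *ᵥ βhat - (U *ᵥ β + ξ) = U *ᵥ (βhat - β) - ξ := by
    funext i; simp [Matrix.mulVec_sub]; ring
  have e2 : U *ᵥ β - (U *ᵥ β + ξ) = -ξ := by
    funext i; simp
  rw [e1, e2] at hm
  set w := U *ᵥ (βhat - β) with hwdef
  have hwξ : eNorm (w - ξ) ^ 2 = ∑ i, w i ^ 2 - 2 * eInner w ξ + ∑ i, ξ i ^ 2 := by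
    rw [eNorm_sq', eInner]
    have hpt : ∀ i ∈ Finset.univ, (w - ξ) i ^ 2 = w i ^ 2 - 2 * (w i * ξ i) + ξ i ^ 2 := by
      intro i _; simp only [Pi.sub_apply]; ring
    rw [Finset.sum_congr rfl hpt, Finset.sum_add_distrib, Finset.sum_sub_distrib,
      ← Finset.mul_sum]
  have hnξ : eNorm (-ξ) ^ 2 = ∑ i, ξ i ^ 2 := by
    rw [eNorm_sq']; simp
  have hw0 : (0:ℝ) ≤ ∑ i, w i ^ 2 := Finset.sum_nonneg fun i _ => sq_nonneg _
  have key : l * nucNorm (wHankel βhat) - l * nucNorm (wHankel β) ≤ eInner w ξ := by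
    rw [hwξ, hnξ] at hm; linarith
  have e3 : eInner w ξ = eInner (βhat - β) (Uᵀ *ᵥ ξ) := by
    rw [hwdef]
    simp only [eInner, Matrix.mulVec, dotProduct, Matrix.transpose_apply,
      Finset.sum_mul, Finset.mul_sum]
    rw [Finset.sum_comm]
    apply Finset.sum_congr rfl; intro k _
    apply Finset.sum_congr rfl; intro i _
    ring
  have e4 : eInner (βhat - β) (Uᵀ *ᵥ ξ)
      = frobInner (wHankel (Uᵀ *ᵥ ξ)) (wHankel (βhat - β)) := by
    rw [wHankel_isometry, frobInner_comm']
  have e5 := frobInner_le_spec_nuc (wHankel (Uᵀ *ᵥ ξ)) (wHankel (βhat - β))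
  rw [div_mul_eq_mul_div, le_div_iff₀ hl]
  have hring : (nucNorm (wHankel βhat) - nucNorm (wHankel β)) * l
      = l * nucNorm (wHankel βhat) - l * nucNorm (wHankel β) := by ring
  linarith

end
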